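/- Generalized Cauchy–Binet, polynomial form: Let F and G be n×m matrices over a commutative ring R. Then for every z ∈ R, det(1 + z·Fᵀ·G) = Σ_P z^{|P|}·det(F_P)·det(G_P), where the sum runs over all patterns P = (I,J) of every size k = 0,1,…,m (I a k-subset of rows, J a k-subset of columns), and the empty pattern |P| = 0 contributes 1 to the sum. -/
import Mathlib


open Matrix

section AuxCauchyBinet

open Finset

variable {R : Type*} [CommRing R]

lemma step1 {n k : ℕ} (A B : Matrix (Fin n) (Fin k) R) :
    (Aᵀ * B).det =
      ∑ r : Fin k → Fin n, (∏ j, A (r j) j) * (B.submatrix r id).det := by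
  have : (Aᵀ * B).det =
      (Matrix.detRowAlternating (R := R) (n := Fin k)).toMultilinearMap
        (fun j => ∑ i, A i j • B i) := by
    congr 1
    ext j l
    simp [Matrix.mul_apply, Finset.sum_apply]
  rw [this, MultilinearMap.map_sum]
  refine Finset.sum_congr rfl fun r _ => ?_
  rw [MultilinearMap.map_smul_univ]
  simp [smul_eq_mul]
  rfl

lemma step2 {n k : ℕ} (A B : Matrix (Fin n) (Fin k) R) :
    ∑ r : Fin k → Fin n, (∏ j, A (r j) j) * (B.submatrix r id).det =
      ∑ I : {s : Finset (Fin n) // s.card = k},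
        (A.submatrix (I.1.orderEmbOfFin I.2) id).det *
        (B.submatrix (I.1.orderEmbOfFin I.2) id).det := by
  classical
  rw [← Finset.sum_filter_add_sum_filter_not Finset.univ (fun r => Function.Injective r)]
  have hzero : ∑ r ∈ Finset.univ.filter (fun r : Fin k → Fin n => ¬ Function.Injective r),
      (∏ j, A (r j) j) * (B.submatrix r id).det = 0 := by
    refine Finset.sum_eq_zero fun r hr => ?_
    rw [Finset.mem_filter] at hr
    obtain ⟨a, b, hab, hne⟩ := Function.not_injective_iff.mp hr.2
    have : (B.submatrix r id).det = 0 := by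
      apply Matrix.detRowAlternating.map_eq_zero_of_not_injective
      intro hinj
      exact hne (hinj (show (fun j => B (r j)) a = (fun j => B (r j)) b by simp [hab]))
    rw [this, mul_zero]
  rw [hzero, add_zero]
  have key : ∑ p : {s : Finset (Fin n) // s.card = k} × Equiv.Perm (Fin k),
      (∏ j, A ((p.1.1.orderEmbOfFin p.1.2) (p.2 j)) j) *
        (B.submatrix ((p.1.1.orderEmbOfFin p.1.2) ∘ p.2) id).det =
      ∑ r ∈ Finset.univ.filter (fun r : Fin k → Fin n => Function.Injective r),
        (∏ j, A (r j) j) * (B.submatrix r id).det := by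
    refine Finset.sum_bij (fun p _ => (p.1.1.orderEmbOfFin p.1.2) ∘ p.2) ?_ ?_ ?_ ?_
    · intro p _
      simp only [Finset.mem_filter, Finset.mem_univ, true_and]
      exact (p.1.1.orderEmbOfFin p.1.2).injective.comp p.2.injective
    · rintro ⟨I, π⟩ _ ⟨I', π'⟩ _ h
      have himg : I.1 = I'.1 := by
        have h1 : Set.range ((I.1.orderEmbOfFin I.2) ∘ π) = ↑I.1 := by
          rw [Set.range_comp, π.range_eq_univ, Set.image_univ,
            Finset.range_orderEmbOfFin]
        have h2 : Set.range ((I'.1.orderEmbOfFin I'.2) ∘ π') = ↑I'.1 := by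
          rw [Set.range_comp, π'.range_eq_univ, Set.image_univ,
            Finset.range_orderEmbOfFin]
        simp only at h
        refine Finset.coe_injective ?_
        rw [← h1, ← h2, h]
      obtain ⟨I, hI⟩ := I
      obtain ⟨I', hI'⟩ := I'
      simp only at himg
      subst himg
      simp only [Prod.mk.injEq, Subtype.mk.injEq, true_and]
      refine Equiv.ext fun j => ?_
      simp only at h
      exact (I.orderEmbOfFin hI).injective (congrFun h j)
    · intro r hr
      rw [Finset.mem_filter] at hr
      have hinj := hr.2
      set I : Finset (Fin n) := Finset.univ.image r with hIdef
      have hcard : I.card = k := by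
        rw [hIdef, Finset.card_image_of_injective _ hinj, Finset.card_univ, Fintype.card_fin]
      have hmem : ∀ j, r j ∈ I := fun j => Finset.mem_image_of_mem r (Finset.mem_univ j)
      have gbij : Function.Bijective (fun j => (⟨r j, hmem j⟩ : {x // x ∈ I})) := by
        constructor
        · intro a b hab
          exact hinj (congrArg Subtype.val hab)
        · rintro ⟨x, hx⟩
          obtain ⟨j, _, hj⟩ := Finset.mem_image.mp hx
          exact ⟨j, Subtype.ext hj⟩
      refine ⟨(⟨I, hcard⟩, (Equiv.ofBijective _ gbij).trans
        (I.orderIsoOfFin hcard).toEquiv.symm), Finset.mem_univ _, ?_⟩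
      funext j
      simp only [Function.comp_apply, Equiv.trans_apply]
      have : (I.orderIsoOfFin hcard) ((I.orderIsoOfFin hcard).toEquiv.symm
          (Equiv.ofBijective _ gbij j)) = Equiv.ofBijective _ gbij j := by
        simp
      calc (I.orderEmbOfFin hcard) ((I.orderIsoOfFin hcard).toEquiv.symm
            (Equiv.ofBijective _ gbij j))
          = ((I.orderIsoOfFin hcard) ((I.orderIsoOfFin hcard).toEquiv.symm
            (Equiv.ofBijective _ gbij j)) : Fin n) := rfl
        _ = r j := by rw [this]; rfl
    · intro p _
      rfl
  rw [← key, Fintype.sum_prod_type]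
  refine Finset.sum_congr rfl fun I _ => ?_
  have : ∀ π : Equiv.Perm (Fin k),
      (B.submatrix ((I.1.orderEmbOfFin I.2) ∘ π) id).det =
        (Equiv.Perm.sign π : ℤ) * (B.submatrix (I.1.orderEmbOfFin I.2) id).det := by
    intro π
    have : B.submatrix ((I.1.orderEmbOfFin I.2) ∘ π) id =
        (B.submatrix (I.1.orderEmbOfFin I.2) id).submatrix π id := by
      ext a b; rfl
    rw [this, Matrix.det_permute]
  simp_rw [this]
  rw [Matrix.det_apply' (A.submatrix (I.1.orderEmbOfFin I.2) id), Finset.sum_mul]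
  refine Finset.sum_congr rfl fun π _ => ?_
  simp only [Matrix.submatrix_apply, id_eq]
  ring

lemma det_submatrix_of_identity_rows {m : ℕ} (M : Matrix (Fin m) (Fin m) R)
    (S : Finset (Fin m)) :
    (Matrix.of fun i j => if i ∈ S then M i j else (1 : Matrix (Fin m) (Fin m) R) i j).det =
      (M.submatrix (S.orderEmbOfFin rfl) (S.orderEmbOfFin rfl)).det := by
  classical
  set N := Matrix.of fun i j => if i ∈ S then M i j else (1 : Matrix (Fin m) (Fin m) R) i j
  let e : {i // i ∈ S} ⊕ {i // i ∉ S} ≃ Fin m := Equiv.sumCompl (· ∈ S)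
  have h1 : N.det = (N.submatrix e e).det := (Matrix.det_submatrix_equiv_self e N).symm
  have h2 : N.submatrix e e = Matrix.fromBlocks
      (Matrix.of fun (a : {i // i ∈ S}) (b : {i // i ∈ S}) => M a.1 b.1)
      (Matrix.of fun (a : {i // i ∈ S}) (b : {i // i ∉ S}) => M a.1 b.1)
      0 1 := by
    ext a b
    cases a with
    | inl a => cases b with
      | inl b => simp [N, e, a.2]
      | inr b => simp [N, e, a.2]
    | inr a => cases b with
      | inl b =>
        have : a.1 ≠ b.1 := fun h => a.2 (h ▸ b.2)
        simp [N, e, a.2, Matrix.one_apply, this]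
      | inr b =>
        simp [N, e, a.2, Matrix.one_apply, Subtype.ext_iff]
  rw [h1, h2, Matrix.det_fromBlocks_zero₂₁, Matrix.det_one, mul_one]
  let g : Fin S.card ≃ {i // i ∈ S} := (S.orderIsoOfFin rfl).toEquiv
  rw [← Matrix.det_submatrix_equiv_self g]
  congr 1

lemma det_one_add_smul_expand {m : ℕ} (z : R) (M : Matrix (Fin m) (Fin m) R) :
    (1 + z • M).det = ∑ S : Finset (Fin m), z ^ S.card *
      (M.submatrix (S.orderEmbOfFin rfl) (S.orderEmbOfFin rfl)).det := by
  classical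
  have h0 : (1 + z • M).det =
      Matrix.detRowAlternating.toMultilinearMap
        ((fun i => (z • M) i) + (fun i => (1 : Matrix (Fin m) (Fin m) R) i)) := by
    rw [add_comm]
    congr 1
  rw [h0, MultilinearMap.map_add_univ]
  refine Finset.sum_congr rfl fun S _ => ?_
  have hpiece : (S.piecewise (fun i => (z • M) i) (fun i => (1 : Matrix (Fin m) (Fin m) R) i)) =
      fun i => (Matrix.diagonal (fun i => if i ∈ S then z else 1) *
        (Matrix.of fun i j => if i ∈ S then M i j else (1 : Matrix (Fin m) (Fin m) R) i j)) i := by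
    funext i
    by_cases hi : i ∈ S <;>
      · funext j
        simp [Finset.piecewise, hi, Matrix.diagonal_mul]
  rw [hpiece]
  have : Matrix.detRowAlternating.toMultilinearMap
      (fun i => (Matrix.diagonal (fun i => if i ∈ S then z else 1) *
        (Matrix.of fun i j => if i ∈ S then M i j else (1 : Matrix (Fin m) (Fin m) R) i j)) i) =
      (Matrix.diagonal (fun i => if i ∈ S then z else 1) *
        (Matrix.of fun i j => if i ∈ S then M i j else (1 : Matrix (Fin m) (Fin m) R) i j)).det :=
    rfl
  rw [this, Matrix.det_mul, Matrix.det_diagonal, det_submatrix_of_identity_rows]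
  congr 1
  rw [Finset.prod_ite_mem, Finset.univ_inter, Finset.prod_const]

lemma cauchy_binet {n k : ℕ} (A B : Matrix (Fin n) (Fin k) R) :
    (Aᵀ * B).det = ∑ I : {s : Finset (Fin n) // s.card = k},
      (A.submatrix (I.1.orderEmbOfFin I.2) id).det *
      (B.submatrix (I.1.orderEmbOfFin I.2) id).det :=
  (step1 A B).trans (step2 A B)


end AuxCauchyBinet

/-- The minor of an `n × m` matrix `F` given by a `k`-element set `I` of row indices and a
`k`-element set `J` of column indices. For `k = 0` it equals `1`. -/
def Matrix.minorOn {R : Type*} [CommRing R] {n m k : ℕ} (F : Matrix (Fin n) (Fin m) R)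
    (I : {s : Finset (Fin n) // s.card = k}) (J : {s : Finset (Fin m) // s.card = k}) : R :=
  (F.submatrix (I.1.orderEmbOfFin I.2) (J.1.orderEmbOfFin J.2)).det

/-- Generalized Cauchy–Binet, polynomial form: for `n × m` matrices `F, G` over a commutative
ring `R` and any `z ∈ R`, `det(1 + z Fᵀ G) = Σ_P z^{|P|} det(F_P) det(G_P)`, summing over all
patterns `P = (I, J)` of every size `k = 0, 1, …, m`; the empty pattern contributes `1`. -/
theorem generalized_cauchy_binet_poly {R : Type*} [CommRing R] {n m : ℕ}
    (F G : Matrix (Fin n) (Fin m) R) (z : R) :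
    (1 + z • (Fᵀ * G)).det =
      ∑ k ∈ Finset.range (m + 1), z ^ k *
        ∑ I : {s : Finset (Fin n) // s.card = k}, ∑ J : {s : Finset (Fin m) // s.card = k},
          F.minorOn I J * G.minorOn I J := by
  classical
  rw [det_one_add_smul_expand]
  have hsum : ∀ S : Finset (Fin m),
      ((Fᵀ * G).submatrix (S.orderEmbOfFin rfl) (S.orderEmbOfFin rfl)).det =
      ∑ I : {s : Finset (Fin n) // s.card = S.card},
        F.minorOn I ⟨S, rfl⟩ * G.minorOn I ⟨S, rfl⟩ := by
    intro S
    have h : (Fᵀ * G).submatrix (S.orderEmbOfFin rfl) (S.orderEmbOfFin rfl)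
        = (F.submatrix id (S.orderEmbOfFin rfl))ᵀ * (G.submatrix id (S.orderEmbOfFin rfl)) := by
      ext a b
      simp [Matrix.mul_apply]
    rw [h, cauchy_binet]
    rfl
  simp_rw [hsum]
  have hmap : ∀ S ∈ (Finset.univ : Finset (Finset (Fin m))), S.card ∈ Finset.range (m + 1) := by
    intro S _
    simp only [Finset.mem_range, Nat.lt_succ_iff]
    simpa using Finset.card_le_univ S
  rw [← Finset.sum_fiberwise_of_maps_to hmap]
  refine Finset.sum_congr rfl fun k hk => ?_
  rw [Finset.sum_comm (γ := {s : Finset (Fin n) // s.card = k}), Finset.mul_sum]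
  have hiff : ∀ S : Finset (Fin m),
      S ∈ (Finset.univ.filter fun S => S.card = k) ↔ S.card = k := by
    intro S; simp
  rw [Finset.sum_subtype _ hiff]
  refine Finset.sum_congr rfl fun J _ => ?_
  obtain ⟨S, hS⟩ := J
  subst hS
  rfl
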